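/- Let u = (u₁, u₂)ᵀ ∈ 𝔻[ω]² be a vector and let k > 0 be a denominator exponent for u (i.e., √2^k·u₁, √2^k·u₂ ∈ ℤ[ω]). Suppose that x̄₁·x₁ ≡ x̄₂·x₂ (mod 2), where x_j = √2^k·u_j and x̄ denotes complex conjugation. Then there exists a finite sequence of 2×2 matrices U₁, ..., U_h, each equal to H = (1/√2)[[1,1],[1,−1]] or T = diag(1,ω), such that k − 1 is a denominator exponent for v = U₁⋯U_h·u, i.e., √2^(k−1)·v has both entries in ℤ[ω]. -/

import Mathlib

noncomputable section

/-- The eighth root of unity `ω = e^{iπ/4} = (1+i)/√2`. -/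
def ω : ℂ := (1 + Complex.I) / Real.sqrt 2

/-- A rational number is dyadic if it has the form `a / 2^n` with `a ∈ ℤ`, `n ∈ ℕ`. -/
def IsDyadic (q : ℚ) : Prop := ∃ (a : ℤ) (n : ℕ), q = a / 2 ^ n

/-- Membership in the ring `𝔻[ω] = ℤ[1/√2, i]`: complex numbers of the form
`aω³ + bω² + cω + d` with `a, b, c, d` dyadic rationals. -/
def inDω (t : ℂ) : Prop :=
  ∃ a b c d : ℚ, IsDyadic a ∧ IsDyadic b ∧ IsDyadic c ∧ IsDyadic d ∧
    t = (a : ℂ) * ω ^ 3 + (b : ℂ) * ω ^ 2 + (c : ℂ) * ω + (d : ℂ)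

/-- Membership in the ring `ℤ[ω]`: complex numbers of the form
`aω³ + bω² + cω + d` with `a, b, c, d ∈ ℤ`. -/
def inZω (t : ℂ) : Prop :=
  ∃ a b c d : ℤ, t = (a : ℂ) * ω ^ 3 + (b : ℂ) * ω ^ 2 + (c : ℂ) * ω + (d : ℂ)

/-- The Hadamard gate. -/
def Hmat : Matrix (Fin 2) (Fin 2) ℂ := ((Real.sqrt 2 : ℂ))⁻¹ • !![1, 1; 1, -1]

/-- The phase gate `S`. -/
def Smat : Matrix (Fin 2) (Fin 2) ℂ := !![1, 0; 0, Complex.I]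

/-- The `T` gate. -/
def Tmat : Matrix (Fin 2) (Fin 2) ℂ := !![1, 0; 0, ω]

/-- The `X` (not) gate. -/
def Xmat : Matrix (Fin 2) (Fin 2) ℂ := !![0, 1; 1, 0]

/-- The controlled-not gate, as a matrix on two qubits: it sends `|a,b⟩` to `|a, a+b⟩`. -/
def CNOTmat : Matrix (Fin 2 × Fin 2) (Fin 2 × Fin 2) ℂ :=
  Matrix.of fun p q => if p.1 = q.1 ∧ p.2 = q.1 + q.2 then 1 else 0


lemma s2c_sq : (Real.sqrt 2 : ℂ) ^ 2 = 2 := by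
  rw [← Complex.ofReal_pow, Real.sq_sqrt (by norm_num : (0:ℝ) ≤ 2)]
  norm_num

lemma s2c_ne : (Real.sqrt 2 : ℂ) ≠ 0 := by
  simp only [ne_eq, Complex.ofReal_eq_zero]
  positivity

lemma omega_sq : ω ^ 2 = Complex.I := by
  rw [ω, div_pow, s2c_sq]
  field_simp
  linear_combination Complex.I_sq

lemma omega_pow4 : ω ^ 4 = -1 := by
  calc ω ^ 4 = (ω ^ 2) ^ 2 := by ring
  _ = Complex.I ^ 2 := by rw [omega_sq]
  _ = -1 := Complex.I_sq

lemma omega_cube : ω ^ 3 = Complex.I * ω := by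
  rw [← omega_sq]; ring

lemma s2_eq : (Real.sqrt 2 : ℂ) = ω - ω ^ 3 := by
  rw [omega_cube, ω]
  field_simp
  linear_combination s2c_sq + Complex.I_sq

lemma conj_omega : (starRingEnd ℂ) ω = -ω ^ 3 := by
  rw [omega_cube]
  rw [show (starRingEnd ℂ) ω = (1 - Complex.I) / Real.sqrt 2 by
    rw [ω, map_div₀, map_add, map_one, Complex.conj_I, Complex.conj_ofReal]; ring_nf]
  rw [ω, div_eq_iff s2c_ne]
  field_simp
  linear_combination Complex.I_sq

abbrev Z4 := ℤ × ℤ × ℤ × ℤ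

def phi (x : Z4) : ℂ := (x.1 : ℂ) * ω ^ 3 + (x.2.1 : ℂ) * ω ^ 2 + (x.2.2.1 : ℂ) * ω + (x.2.2.2 : ℂ)

def rotZ (x : Z4) : Z4 := (x.2.1, x.2.2.1, x.2.2.2, -x.1)

def s2Z (x : Z4) : Z4 := (x.2.1 - x.2.2.2, x.1 + x.2.2.1, x.2.1 + x.2.2.2, x.2.2.1 - x.1)

def mulZ (x y : Z4) : Z4 :=
  (x.1*y.2.2.2 + x.2.1*y.2.2.1 + x.2.2.1*y.2.1 + x.2.2.2*y.1,
   x.2.1*y.2.2.2 + x.2.2.1*y.2.2.1 + x.2.2.2*y.2.1 - x.1*y.1,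
   x.2.2.1*y.2.2.2 + x.2.2.2*y.2.2.1 - x.1*y.2.1 - x.2.1*y.1,
   x.2.2.2*y.2.2.2 - x.1*y.2.2.1 - x.2.1*y.2.1 - x.2.2.1*y.1)

lemma phi_add (x y : Z4) : phi x + phi y = phi (x + y) := by
  simp only [phi, Prod.fst_add, Prod.snd_add]
  push_cast; ring

lemma phi_sub (x y : Z4) : phi x - phi y = phi (x - y) := by
  simp only [phi, Prod.fst_sub, Prod.snd_sub]
  push_cast; ring

lemma phi_two (e f g h : ℤ) : phi (2*e, 2*f, 2*g, 2*h) = 2 * phi (e, f, g, h) := by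
  simp only [phi]
  push_cast; ring

lemma phi_rot (x : Z4) : ω * phi x = phi (rotZ x) := by
  simp only [phi, rotZ]
  push_cast
  linear_combination (x.1 : ℂ) * omega_pow4

lemma phi_rotj (j : ℕ) (x : Z4) : ω ^ j * phi x = phi (rotZ^[j] x) := by
  induction j generalizing x with
  | zero => simp
  | succ n ih =>
    rw [Function.iterate_succ_apply', ← phi_rot, ← ih, pow_succ]
    ring

lemma phi_s2 (x : Z4) : (Real.sqrt 2 : ℂ) * phi x = phi (s2Z x) := by
  rw [s2_eq]
  simp only [phi, s2Z]
  push_cast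
  linear_combination ((x.1 : ℂ) - x.2.2.1 - x.2.1 * ω - x.1 * ω ^ 2) * omega_pow4

lemma phi_mul (x y : Z4) : phi x * phi y = phi (mulZ x y) := by
  simp only [phi, mulZ]
  push_cast
  linear_combination ((x.1:ℂ)*y.2.2.1 + x.2.1*y.2.1 + (y.1:ℂ)*x.2.2.1 + ((x.1:ℂ)*y.2.1 + (y.1:ℂ)*x.2.1)*ω + (x.1:ℂ)*y.1*ω^2) * omega_pow4

lemma conj_phi (x : Z4) : (starRingEnd ℂ) (phi x) = phi (-x.2.2.1, -x.2.1, -x.1, x.2.2.2) := by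
  simp only [phi, map_add, map_mul, map_pow, conj_omega, map_intCast]
  push_cast
  linear_combination (-(x.1:ℂ) * ω * (ω^4 - 1) + (x.2.1:ℂ) * ω^2) * omega_pow4

lemma int_s2 {m n : ℤ} (h : Real.sqrt 2 * (m : ℝ) = (n : ℝ)) : m = 0 ∧ n = 0 := by
  rcases eq_or_ne m 0 with hm | hm
  · refine ⟨hm, ?_⟩
    rw [hm] at h
    have : (n : ℝ) = 0 := by simpa using h.symm
    exact_mod_cast this
  · exfalso
    have hmr : ((m : ℝ)) ≠ 0 := Int.cast_ne_zero.mpr hm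
    have : Real.sqrt 2 = ((n / m : ℚ) : ℝ) := by
      push_cast
      rw [eq_div_iff hmr]
      linear_combination h
    exact irrational_sqrt_two ⟨_, this.symm⟩

lemma int_s2' {m n : ℤ} (h : (Real.sqrt 2 : ℂ) * (m : ℂ) = (n : ℂ)) : m = 0 ∧ n = 0 := by
  apply int_s2 (m := m) (n := n)
  exact_mod_cast h

lemma phi_zero {x : Z4} (h : phi x = 0) : x = 0 := by
  obtain ⟨a, b, c, d⟩ := x
  have hconj : phi (-c, -b, -a, d) = 0 := by
    have := conj_phi (a, b, c, d)
    rw [h, map_zero] at this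
    exact this.symm
  have hsum : phi ((a, b, c, d) + (-c, -b, -a, d)) = 0 := by
    rw [← phi_add, h, hconj]; ring
  have hdiff : phi ((a, b, c, d) - (-c, -b, -a, d)) = 0 := by
    rw [← phi_sub, h, hconj]; ring
  -- hsum : phi (a - c, 0, c - a, 2d) = 0, gives -(a-c)√2 + 2d = 0
  have e1 : (Real.sqrt 2 : ℂ) * ((a - c : ℤ) : ℂ) = ((2 * d : ℤ) : ℂ) := by
    have := hsum
    simp only [phi, Prod.mk_add_mk, Prod.fst_add, Prod.snd_add] at this
    push_cast at this ⊢
    rw [s2_eq]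
    linear_combination -this
  have e2 : (Real.sqrt 2 : ℂ) * ((a + c : ℤ) : ℂ) = ((-(2 * b) : ℤ) : ℂ) := by
    have := hdiff
    simp only [phi, Prod.mk_sub_mk, Prod.fst_sub, Prod.snd_sub] at this
    push_cast at this ⊢
    -- phi(a+c, 2b, a+c, 0) = 0 : (a+c)(ω³+ω) + 2bω² = 0 ; ω³+ω = √2 I, ω² = I
    rw [s2_eq]
    linear_combination (-ω^2) * this + (((a:ℂ) + c) * ω + 2 * b) * omega_pow4
  obtain ⟨h1, h2⟩ := int_s2' e1
  obtain ⟨h3, h4⟩ := int_s2' e2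
  have hz : a = 0 ∧ b = 0 ∧ c = 0 ∧ d = 0 := by omega
  simp [Prod.ext_iff, hz.1, hz.2.1, hz.2.2.1, hz.2.2.2]

lemma phi_inj {x y : Z4} (h : phi x = phi y) : x = y := by
  have : phi (x - y) = 0 := by rw [← phi_sub, h]; ring
  exact sub_eq_zero.mp (phi_zero this)
abbrev V2 := ZMod 2 × ZMod 2 × ZMod 2 × ZMod 2
abbrev V4 := ZMod 4 × ZMod 4 × ZMod 4 × ZMod 4

def rot2 (x : V2) : V2 := (x.2.1, x.2.2.1, x.2.2.2, -x.1)
def rot4 (x : V4) : V4 := (x.2.1, x.2.2.1, x.2.2.2, -x.1)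

def c2 (x : Z4) : V2 := ((x.1 : ZMod 2), (x.2.1 : ZMod 2), (x.2.2.1 : ZMod 2), (x.2.2.2 : ZMod 2))
def c4 (x : Z4) : V4 := ((x.1 : ZMod 4), (x.2.1 : ZMod 4), (x.2.2.1 : ZMod 4), (x.2.2.2 : ZMod 4))

lemma c2_rot (x : Z4) : c2 (rotZ x) = rot2 (c2 x) := by
  simp [c2, rotZ, rot2]

lemma c2_rotj (j : ℕ) (x : Z4) : c2 (rotZ^[j] x) = rot2^[j] (c2 x) := by
  induction j generalizing x with
  | zero => rfl
  | succ n ih => rw [Function.iterate_succ_apply', Function.iterate_succ_apply', c2_rot, ih]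

lemma c4_rot (x : Z4) : c4 (rotZ x) = rot4 (c4 x) := by
  simp [c4, rotZ, rot4]

lemma c4_rotj (j : ℕ) (x : Z4) : c4 (rotZ^[j] x) = rot4^[j] (c4 x) := by
  induction j generalizing x with
  | zero => rfl
  | succ n ih => rw [Function.iterate_succ_apply', Function.iterate_succ_apply', c4_rot, ih]

def pHyp (x y : V2) : Prop :=
  x.1*x.1 + x.2.1*x.2.1 + x.2.2.1*x.2.2.1 + x.2.2.2*x.2.2.2
    = y.1*y.1 + y.2.1*y.2.1 + y.2.2.1*y.2.2.1 + y.2.2.2*y.2.2.2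

def qHyp (x y : V2) : Prop :=
  x.1*x.2.1 + x.2.1*x.2.2.1 + x.2.2.1*x.2.2.2 - x.2.2.2*x.1
    = y.1*y.2.1 + y.2.1*y.2.2.1 + y.2.2.1*y.2.2.2 - y.2.2.2*y.1

def triConcl (x y : V2) : Prop :=
  (x.1 + x.2.2.1 = 0 ∧ x.2.1 + x.2.2.2 = 0 ∧ y.1 + y.2.2.1 = 0 ∧ y.2.1 + y.2.2.2 = 0) ∨
  (∃ j : Fin 8, x = rot2^[j.val] y) ∨
  (∃ m : Fin 8, x + rot2^[m.val] y = (1, 1, 1, 1))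

instance (x y : V2) : Decidable (pHyp x y) := by unfold pHyp; infer_instance
instance (x y : V2) : Decidable (qHyp x y) := by unfold qHyp; infer_instance
instance (x y : V2) : Decidable (triConcl x y) := by unfold triConcl; infer_instance

def oddV4 (s : V4) : Prop :=
  (s.1 = 1 ∨ s.1 = 3) ∧ (s.2.1 = 1 ∨ s.2.1 = 3) ∧ (s.2.2.1 = 1 ∨ s.2.2.1 = 3) ∧ (s.2.2.2 = 1 ∨ s.2.2.2 = 3)

def d2s2 (v : V4) : Prop :=
  v.2.1 - v.2.2.2 = 0 ∧ v.1 + v.2.2.1 = 0 ∧ v.2.1 + v.2.2.2 = 0 ∧ v.2.2.1 - v.1 = 0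

instance (s : V4) : Decidable (oddV4 s) := by unfold oddV4; infer_instance
instance (v : V4) : Decidable (d2s2 v) := by unfold d2s2; infer_instance

set_option maxHeartbeats 1600000 in
theorem tri : ∀ x y : V2, pHyp x y → qHyp x y → triConcl x y := by decide

set_option maxHeartbeats 12000000 in
set_option maxRecDepth 100000 in
theorem claim4 : ∀ s t : V4, oddV4 s → oddV4 t →
    ∃ j : Fin 8, d2s2 (s + rot4^[j.val] t) := by decide

lemma Tmat_mulVec (v : Fin 2 → ℂ) : Tmat.mulVec v = ![v 0, ω * v 1] := by
  funext i
  fin_cases i <;>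
    simp [Tmat, Matrix.mulVec, dotProduct, Fin.sum_univ_two]

lemma Tmat_pow_mulVec (n : ℕ) (v : Fin 2 → ℂ) : (Tmat ^ n).mulVec v = ![v 0, ω ^ n * v 1] := by
  induction n generalizing v with
  | zero =>
    funext i
    rw [pow_zero, Matrix.one_mulVec]
    fin_cases i <;> simp
  | succ n ih =>
    rw [pow_succ, ← Matrix.mulVec_mulVec, Tmat_mulVec, ih]
    funext i
    fin_cases i <;> simp <;> ring

lemma Hmat_mulVec (v : Fin 2 → ℂ) :
    Hmat.mulVec v = ![(Real.sqrt 2 : ℂ)⁻¹ * (v 0 + v 1), (Real.sqrt 2 : ℂ)⁻¹ * (v 0 - v 1)] := by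
  funext i
  fin_cases i <;>
    simp [Hmat, Matrix.mulVec, dotProduct, Fin.sum_univ_two, Matrix.smul_apply,
      smul_eq_mul] <;> ring

lemma inZω_phi (x : Z4) : inZω (phi x) := ⟨x.1, x.2.1, x.2.2.1, x.2.2.2, rfl⟩

lemma dvd_of_zmod {n : ℕ} {a : ℤ} (h : (a : ZMod n) = 0) : (n : ℤ) ∣ a :=
  (ZMod.intCast_zmod_eq_zero_iff_dvd a n).1 h

lemma odd4 {z : ℤ} (hz : (2:ℤ) ∣ z - 1) : ((z : ZMod 4) = 1 ∨ (z : ZMod 4) = 3) := by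
  have h4 : (4:ℤ) ∣ z - 1 ∨ (4:ℤ) ∣ z - 3 := by omega
  rcases h4 with h | h
  · left
    have : ((z - 1 : ℤ) : ZMod 4) = 0 := by
      rw [ZMod.intCast_zmod_eq_zero_iff_dvd]; exact_mod_cast h
    push_cast at this
    linear_combination this
  · right
    have : ((z - 3 : ℤ) : ZMod 4) = 0 := by
      rw [ZMod.intCast_zmod_eq_zero_iff_dvd]; exact_mod_cast h
    push_cast at this
    linear_combination this

lemma c4_add (x y : Z4) : c4 x + c4 y = c4 (x + y) := by
  simp only [c4, Prod.fst_add, Prod.snd_add, Prod.mk_add_mk]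
  push_cast
  rfl

def OddT (x : Z4) : Prop := (2:ℤ) ∣ x.1 - 1 ∧ (2:ℤ) ∣ x.2.1 - 1 ∧ (2:ℤ) ∣ x.2.2.1 - 1 ∧ (2:ℤ) ∣ x.2.2.2 - 1

lemma rotZ_odd {x : Z4} (h : OddT x) : OddT (rotZ x) := by
  obtain ⟨h1, h2, h3, h4⟩ := h
  refine ⟨h2, h3, h4, ?_⟩
  simp only [rotZ]
  omega

lemma rotZ_odd_iter {x : Z4} (j : ℕ) (h : OddT x) : OddT (rotZ^[j] x) := by
  induction j with
  | zero => exact h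
  | succ n ih => rw [Function.iterate_succ_apply']; exact rotZ_odd ih

lemma phi_div2s2 {x : Z4} {e1 e2 e3 e4 : ℤ}
    (h1 : x.2.1 - x.2.2.2 = 4*e1) (h2 : x.1 + x.2.2.1 = 4*e2)
    (h3 : x.2.1 + x.2.2.2 = 4*e3) (h4 : x.2.2.1 - x.1 = 4*e4) :
    phi x = 2 * (Real.sqrt 2 : ℂ) * phi (e1, e2, e3, e4) := by
  obtain ⟨x1, x2, x3, x4⟩ := x
  simp only at h1 h2 h3 h4
  have hx : (x1, x2, x3, x4) = ((2*(e2-e4), 2*(e1+e3), 2*(e2+e4), 2*(e3-e1)) : Z4) := by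
    simp only [Prod.mk.injEq]
    refine ⟨by omega, by omega, by omega, by omega⟩
  rw [hx, phi_two]
  have : ((e2-e4, e1+e3, e2+e4, e3-e1) : Z4) = s2Z (e1, e2, e3, e4) := rfl
  rw [this, ← phi_s2]
  ring

lemma hpow_s2 {k : ℕ} (hk : 0 < k) :
    (Real.sqrt 2 : ℂ) ^ k = (Real.sqrt 2 : ℂ) ^ (k-1) * (Real.sqrt 2 : ℂ) := by
  rw [← pow_succ]
  congr 1
  omega

lemma entry_half {k : ℕ} (hk : 0 < k) (z : ℂ) :
    2 * ((Real.sqrt 2 : ℂ)^(k-1) * ((Real.sqrt 2 : ℂ)⁻¹ * z)) = (Real.sqrt 2 : ℂ)^k * z := by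
  rw [hpow_s2 hk]
  field_simp
  linear_combination -z * s2c_sq

lemma entry_quarter {k : ℕ} (hk : 0 < k) (c z w : ℂ) :
    2 * (Real.sqrt 2 : ℂ) * ((Real.sqrt 2 : ℂ)^(k-1) *
      ((Real.sqrt 2 : ℂ)⁻¹ * ((Real.sqrt 2 : ℂ)⁻¹ * z + c * ((Real.sqrt 2 : ℂ)⁻¹ * w))))
    = (Real.sqrt 2 : ℂ)^k * z + c * ((Real.sqrt 2 : ℂ)^k * w) := by
  rw [hpow_s2 hk]
  field_simp
  linear_combination -(z + c * w) * s2c_sq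
lemma zmod2_zero {x : ℤ} (h : (2:ℤ) ∣ x) : ((x : ℤ) : ZMod 2) = 0 := by
  rw [ZMod.intCast_zmod_eq_zero_iff_dvd]; exact_mod_cast h

lemma zmod2_dvd {x : ℤ} (h : ((x : ℤ) : ZMod 2) = 0) : (2:ℤ) ∣ x := by
  rw [ZMod.intCast_zmod_eq_zero_iff_dvd] at h; exact_mod_cast h

lemma zmod4_dvd {x : ℤ} (h : ((x : ℤ) : ZMod 4) = 0) : (4:ℤ) ∣ x := by
  rw [ZMod.intCast_zmod_eq_zero_iff_dvd] at h; exact_mod_cast h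

/-- Row operation lemma: let `u ∈ 𝔻[ω]²` have denominator exponent `k > 0` and suppose
`x̄₁x₁ ≡ x̄₂x₂ (mod 2)` where `x_j = √2^k u_j`. Then there is a finite sequence of matrices,
each equal to `H` or `T`, whose product `U₁⋯U_h` applied to `u` yields a vector with
denominator exponent `k − 1`. -/
theorem stmt8 (u : Fin 2 → ℂ) (hu : ∀ i, inDω (u i)) (k : ℕ) (hk : 0 < k)
    (hden : ∀ i, inZω ((Real.sqrt 2 : ℂ) ^ k * u i))
    (h : inZω (((starRingEnd ℂ) ((Real.sqrt 2 : ℂ) ^ k * u 0) * ((Real.sqrt 2 : ℂ) ^ k * u 0)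
        - (starRingEnd ℂ) ((Real.sqrt 2 : ℂ) ^ k * u 1) * ((Real.sqrt 2 : ℂ) ^ k * u 1)) / 2)) :
    ∃ L : List (Matrix (Fin 2) (Fin 2) ℂ),
      (∀ M ∈ L, M = Hmat ∨ M = Tmat) ∧
      ∀ i, inZω ((Real.sqrt 2 : ℂ) ^ (k - 1) * (L.prod.mulVec u) i) := by
  obtain ⟨a0, b0, c0, d0, hX0⟩ := hden 0
  obtain ⟨a1, b1, c1, d1, hX1⟩ := hden 1
  have hX0' : (Real.sqrt 2 : ℂ) ^ k * u 0 = phi (a0, b0, c0, d0) := hX0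
  have hX1' : (Real.sqrt 2 : ℂ) ^ k * u 1 = phi (a1, b1, c1, d1) := hX1
  obtain ⟨g1, g2, g3, g4, hE⟩ := h
  rw [div_eq_iff (by norm_num : (2:ℂ) ≠ 0)] at hE
  have t0 : (starRingEnd ℂ) ((Real.sqrt 2:ℂ)^k * u 0) * ((Real.sqrt 2:ℂ)^k * u 0)
      = phi (mulZ (-c0, -b0, -a0, d0) (a0, b0, c0, d0)) := by
    rw [hX0', conj_phi, phi_mul]
  have t1 : (starRingEnd ℂ) ((Real.sqrt 2:ℂ)^k * u 1) * ((Real.sqrt 2:ℂ)^k * u 1)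
      = phi (mulZ (-c1, -b1, -a1, d1) (a1, b1, c1, d1)) := by
    rw [hX1', conj_phi, phi_mul]
  have hE' : phi (mulZ (-c0, -b0, -a0, d0) (a0, b0, c0, d0))
      - phi (mulZ (-c1, -b1, -a1, d1) (a1, b1, c1, d1)) = phi (2*g1, 2*g2, 2*g3, 2*g4) := by
    rw [← t0, ← t1, hE]
    simp only [phi]
    push_cast
    ring
  have hcomp : mulZ (-c0,-b0,-a0,d0) (a0,b0,c0,d0) - mulZ (-c1,-b1,-a1,d1) (a1,b1,c1,d1)
      = ((2*g1, 2*g2, 2*g3, 2*g4) : Z4) := phi_inj ((phi_sub _ _).symm.trans hE')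
  have hq : (a0*b0 + b0*c0 + c0*d0 - d0*a0) - (a1*b1 + b1*c1 + c1*d1 - d1*a1) = 2*g3 := by
    have := congrArg (fun z : Z4 => z.2.2.1) hcomp
    simp only [mulZ, Prod.fst_sub, Prod.snd_sub] at this
    linear_combination this
  have hp : (a0*a0 + b0*b0 + c0*c0 + d0*d0) - (a1*a1 + b1*b1 + c1*c1 + d1*d1) = 2*g4 := by
    have := congrArg (fun z : Z4 => z.2.2.2) hcomp
    simp only [mulZ, Prod.fst_sub, Prod.snd_sub] at this
    linear_combination this
  have hP : pHyp (c2 (a0,b0,c0,d0)) (c2 (a1,b1,c1,d1)) := by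
    have hz := zmod2_zero (x := (a0*a0 + b0*b0 + c0*c0 + d0*d0) - (a1*a1 + b1*b1 + c1*c1 + d1*d1)) ⟨g4, hp⟩
    push_cast at hz
    unfold pHyp c2
    dsimp only
    linear_combination hz
  have hQ : qHyp (c2 (a0,b0,c0,d0)) (c2 (a1,b1,c1,d1)) := by
    have hz := zmod2_zero (x := (a0*b0 + b0*c0 + c0*d0 - d0*a0) - (a1*b1 + b1*c1 + c1*d1 - d1*a1)) ⟨g3, hq⟩
    push_cast at hz
    unfold qHyp c2
    dsimp only
    linear_combination hz
  rcases tri _ _ hP hQ with ⟨hA1, hA2, hA3, hA4⟩ | ⟨j, hB⟩ | ⟨m, hC⟩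
  · -- Case A : both entries divisible by √2, take L = []
    refine ⟨[], by simp, ?_⟩
    dsimp only [c2] at hA1 hA2 hA3 hA4
    have da0 : (2:ℤ) ∣ a0 + c0 := zmod2_dvd (by push_cast; linear_combination hA1)
    have db0 : (2:ℤ) ∣ b0 + d0 := zmod2_dvd (by push_cast; linear_combination hA2)
    have da1 : (2:ℤ) ∣ a1 + c1 := zmod2_dvd (by push_cast; linear_combination hA3)
    have db1 : (2:ℤ) ∣ b1 + d1 := zmod2_dvd (by push_cast; linear_combination hA4)
    intro i
    rw [List.prod_nil, Matrix.one_mulVec]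
    fin_cases i
    · obtain ⟨w1, hw1⟩ : ∃ t, b0 - d0 = 2*t := ⟨(b0-d0)/2, by omega⟩
      obtain ⟨w2, hw2⟩ : ∃ t, a0 + c0 = 2*t := ⟨(a0+c0)/2, by omega⟩
      obtain ⟨w3, hw3⟩ : ∃ t, b0 + d0 = 2*t := ⟨(b0+d0)/2, by omega⟩
      obtain ⟨w4, hw4⟩ : ∃ t, c0 - a0 = 2*t := ⟨(c0-a0)/2, by omega⟩
      have key : (Real.sqrt 2:ℂ)^(k-1) * u 0 = phi (w1, w2, w3, w4) := by
        apply mul_left_cancel₀ s2c_ne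
        calc (Real.sqrt 2:ℂ) * ((Real.sqrt 2:ℂ)^(k-1) * u 0)
            = (Real.sqrt 2:ℂ)^k * u 0 := by rw [hpow_s2 hk]; ring
          _ = phi (a0,b0,c0,d0) := hX0'
          _ = phi (s2Z (w1,w2,w3,w4)) := by
              have he : ((a0,b0,c0,d0) : Z4) = s2Z (w1,w2,w3,w4) := by
                simp only [s2Z, Prod.mk.injEq]
                refine ⟨by omega, by omega, by omega, by omega⟩
              rw [he]
          _ = (Real.sqrt 2:ℂ) * phi (w1,w2,w3,w4) := (phi_s2 _).symm
      exact ⟨w1, w2, w3, w4, key⟩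
    · obtain ⟨w1, hw1⟩ : ∃ t, b1 - d1 = 2*t := ⟨(b1-d1)/2, by omega⟩
      obtain ⟨w2, hw2⟩ : ∃ t, a1 + c1 = 2*t := ⟨(a1+c1)/2, by omega⟩
      obtain ⟨w3, hw3⟩ : ∃ t, b1 + d1 = 2*t := ⟨(b1+d1)/2, by omega⟩
      obtain ⟨w4, hw4⟩ : ∃ t, c1 - a1 = 2*t := ⟨(c1-a1)/2, by omega⟩
      have key : (Real.sqrt 2:ℂ)^(k-1) * u 1 = phi (w1, w2, w3, w4) := by
        apply mul_left_cancel₀ s2c_ne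
        calc (Real.sqrt 2:ℂ) * ((Real.sqrt 2:ℂ)^(k-1) * u 1)
            = (Real.sqrt 2:ℂ)^k * u 1 := by rw [hpow_s2 hk]; ring
          _ = phi (a1,b1,c1,d1) := hX1'
          _ = phi (s2Z (w1,w2,w3,w4)) := by
              have he : ((a1,b1,c1,d1) : Z4) = s2Z (w1,w2,w3,w4) := by
                simp only [s2Z, Prod.mk.injEq]
                refine ⟨by omega, by omega, by omega, by omega⟩
              rw [he]
          _ = (Real.sqrt 2:ℂ) * phi (w1,w2,w3,w4) := (phi_s2 _).symm
      exact ⟨w1, w2, w3, w4, key⟩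
  · -- Case B : x ≡ ω^j y (mod 2), take L = H :: T^j
    rw [← c2_rotj] at hB
    set r : Z4 := rotZ^[j.val] (a1, b1, c1, d1) with hr
    have hXr : ω^j.val * ((Real.sqrt 2:ℂ)^k * u 1) = phi r := by
      rw [hX1', phi_rotj]
    simp only [c2, Prod.ext_iff] at hB
    have e1 : (2:ℤ) ∣ a0 - r.1 := zmod2_dvd (by push_cast; linear_combination hB.1)
    have e2 : (2:ℤ) ∣ b0 - r.2.1 := zmod2_dvd (by push_cast; linear_combination hB.2.1)
    have e3 : (2:ℤ) ∣ c0 - r.2.2.1 := zmod2_dvd (by push_cast; linear_combination hB.2.2.1)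
    have e4 : (2:ℤ) ∣ d0 - r.2.2.2 := zmod2_dvd (by push_cast; linear_combination hB.2.2.2)
    refine ⟨Hmat :: List.replicate j.val Tmat, ?_, ?_⟩
    · intro M hM
      rcases List.mem_cons.mp hM with hM | hM
      · exact Or.inl hM
      · exact Or.inr (List.eq_of_mem_replicate hM)
    have hvec : (Hmat :: List.replicate j.val Tmat).prod.mulVec u
        = ![(Real.sqrt 2:ℂ)⁻¹ * (u 0 + ω^j.val * u 1),
            (Real.sqrt 2:ℂ)⁻¹ * (u 0 - ω^j.val * u 1)] := by
      rw [List.prod_cons, List.prod_replicate, ← Matrix.mulVec_mulVec, Tmat_pow_mulVec, Hmat_mulVec]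
      funext i
      fin_cases i <;> simp
    intro i
    rw [hvec]
    fin_cases i
    · obtain ⟨w1, hw1⟩ : ∃ t, a0 + r.1 = 2*t := ⟨(a0+r.1)/2, by omega⟩
      obtain ⟨w2, hw2⟩ : ∃ t, b0 + r.2.1 = 2*t := ⟨(b0+r.2.1)/2, by omega⟩
      obtain ⟨w3, hw3⟩ : ∃ t, c0 + r.2.2.1 = 2*t := ⟨(c0+r.2.2.1)/2, by omega⟩
      obtain ⟨w4, hw4⟩ : ∃ t, d0 + r.2.2.2 = 2*t := ⟨(d0+r.2.2.2)/2, by omega⟩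
      have key : (Real.sqrt 2:ℂ)^(k-1) * ((Real.sqrt 2:ℂ)⁻¹ * (u 0 + ω^j.val * u 1))
          = phi (w1, w2, w3, w4) := by
        apply mul_left_cancel₀ (by norm_num : (2:ℂ) ≠ 0)
        calc 2 * ((Real.sqrt 2:ℂ)^(k-1) * ((Real.sqrt 2:ℂ)⁻¹ * (u 0 + ω^j.val * u 1)))
            = (Real.sqrt 2:ℂ)^k * (u 0 + ω^j.val * u 1) := entry_half hk _
          _ = phi (a0,b0,c0,d0) + phi r := by
              rw [← hX0', ← hXr]; ring
          _ = phi ((a0,b0,c0,d0) + r) := phi_add _ _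
          _ = phi (2*w1, 2*w2, 2*w3, 2*w4) := by
              have he : ((a0,b0,c0,d0) : Z4) + r = (2*w1, 2*w2, 2*w3, 2*w4) := by
                simp only [Prod.ext_iff, Prod.fst_add, Prod.snd_add]
                refine ⟨by omega, by omega, by omega, by omega⟩
              rw [he]
          _ = 2 * phi (w1, w2, w3, w4) := phi_two _ _ _ _
      exact ⟨w1, w2, w3, w4, by simpa [phi] using key⟩
    · obtain ⟨w1, hw1⟩ : ∃ t, a0 - r.1 = 2*t := ⟨(a0-r.1)/2, by omega⟩
      obtain ⟨w2, hw2⟩ : ∃ t, b0 - r.2.1 = 2*t := ⟨(b0-r.2.1)/2, by omega⟩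
      obtain ⟨w3, hw3⟩ : ∃ t, c0 - r.2.2.1 = 2*t := ⟨(c0-r.2.2.1)/2, by omega⟩
      obtain ⟨w4, hw4⟩ : ∃ t, d0 - r.2.2.2 = 2*t := ⟨(d0-r.2.2.2)/2, by omega⟩
      have key : (Real.sqrt 2:ℂ)^(k-1) * ((Real.sqrt 2:ℂ)⁻¹ * (u 0 - ω^j.val * u 1))
          = phi (w1, w2, w3, w4) := by
        apply mul_left_cancel₀ (by norm_num : (2:ℂ) ≠ 0)
        calc 2 * ((Real.sqrt 2:ℂ)^(k-1) * ((Real.sqrt 2:ℂ)⁻¹ * (u 0 - ω^j.val * u 1)))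
            = (Real.sqrt 2:ℂ)^k * (u 0 - ω^j.val * u 1) := by
              rw [hpow_s2 hk]; field_simp; linear_combination -(u 0 - ω^j.val * u 1) * s2c_sq
          _ = phi (a0,b0,c0,d0) - phi r := by
              rw [← hX0', ← hXr]; ring
          _ = phi ((a0,b0,c0,d0) - r) := phi_sub _ _
          _ = phi (2*w1, 2*w2, 2*w3, 2*w4) := by
              have he : ((a0,b0,c0,d0) : Z4) - r = (2*w1, 2*w2, 2*w3, 2*w4) := by
                simp only [Prod.ext_iff, Prod.fst_sub, Prod.snd_sub]
                refine ⟨by omega, by omega, by omega, by omega⟩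
              rw [he]
          _ = 2 * phi (w1, w2, w3, w4) := phi_two _ _ _ _
      exact ⟨w1, w2, w3, w4, by simpa [phi] using key⟩
  · -- Case C : units in different orbits
    rw [← c2_rotj] at hC
    set r : Z4 := rotZ^[m.val] (a1, b1, c1, d1) with hr
    have hXr : ω^m.val * ((Real.sqrt 2:ℂ)^k * u 1) = phi r := by
      rw [hX1', phi_rotj]
    have hc2add : c2 ((a0,b0,c0,d0) + r) = c2 (a0,b0,c0,d0) + c2 r := by
      simp only [c2, Prod.fst_add, Prod.snd_add, Prod.mk_add_mk]
      push_cast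
      rfl
    have hC' : c2 (((a0,b0,c0,d0) : Z4) + r) = (1,1,1,1) := by rw [hc2add, hC]
    simp only [c2, Prod.ext_iff, Prod.fst_add, Prod.snd_add] at hC'
    push_cast at hC'
    have o1 : (2:ℤ) ∣ (a0 + r.1) - 1 :=
      zmod2_dvd (by push_cast; linear_combination hC'.1)
    have o2 : (2:ℤ) ∣ (b0 + r.2.1) - 1 :=
      zmod2_dvd (by push_cast; linear_combination hC'.2.1)
    have o3 : (2:ℤ) ∣ (c0 + r.2.2.1) - 1 :=
      zmod2_dvd (by push_cast; linear_combination hC'.2.2.1)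
    have o4 : (2:ℤ) ∣ (d0 + r.2.2.2) - 1 :=
      zmod2_dvd (by push_cast; linear_combination hC'.2.2.2)
    have hos : oddV4 (c4 (((a0,b0,c0,d0) : Z4) + r)) := by
      simp only [oddV4, c4, Prod.fst_add, Prod.snd_add]
      exact ⟨odd4 o1, odd4 o2, odd4 o3, odd4 o4⟩
    have hst : OddT (((a0,b0,c0,d0) : Z4) - r) := by
      refine ⟨?_, ?_, ?_, ?_⟩ <;> simp only [Prod.fst_sub, Prod.snd_sub] <;> omega
    have hot : oddV4 (c4 (((a0,b0,c0,d0) : Z4) - r)) := by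
      simp only [oddV4, c4]
      exact ⟨odd4 hst.1, odd4 hst.2.1, odd4 hst.2.2.1, odd4 hst.2.2.2⟩
    obtain ⟨j, hj⟩ := claim4 _ _ hos hot
    rw [← c4_rotj, c4_add] at hj
    set rt : Z4 := rotZ^[j.val] (((a0,b0,c0,d0) : Z4) - r) with hrt
    have hort : OddT rt := rotZ_odd_iter j.val hst
    obtain ⟨ho1, ho2, ho3, ho4⟩ := hort
    obtain ⟨hj1, hj2, hj3, hj4⟩ := hj
    simp only [d2s2, c4, Prod.fst_add, Prod.snd_add, Prod.fst_sub, Prod.snd_sub] at hj1 hj2 hj3 hj4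
    push_cast at hj1 hj2 hj3 hj4
    have f1 : (4:ℤ) ∣ (b0 + r.2.1 + rt.2.1) - (d0 + r.2.2.2 + rt.2.2.2) := by
      apply zmod4_dvd; push_cast; linear_combination hj1
    have f2 : (4:ℤ) ∣ (a0 + r.1 + rt.1) + (c0 + r.2.2.1 + rt.2.2.1) := by
      apply zmod4_dvd; push_cast; linear_combination hj2
    have f3 : (4:ℤ) ∣ (b0 + r.2.1 + rt.2.1) + (d0 + r.2.2.2 + rt.2.2.2) := by
      apply zmod4_dvd; push_cast; linear_combination hj3
    have f4 : (4:ℤ) ∣ (c0 + r.2.2.1 + rt.2.2.1) - (a0 + r.1 + rt.1) := by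
      apply zmod4_dvd; push_cast; linear_combination hj4
    refine ⟨Hmat :: (List.replicate j.val Tmat ++ (Hmat :: List.replicate m.val Tmat)), ?_, ?_⟩
    · intro M hM
      rcases List.mem_cons.mp hM with hM | hM
      · exact Or.inl hM
      rcases List.mem_append.mp hM with hM | hM
      · exact Or.inr (List.eq_of_mem_replicate hM)
      rcases List.mem_cons.mp hM with hM | hM
      · exact Or.inl hM
      · exact Or.inr (List.eq_of_mem_replicate hM)
    have hvec : (Hmat :: (List.replicate j.val Tmat ++ (Hmat :: List.replicate m.val Tmat))).prod.mulVec u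
        = ![(Real.sqrt 2:ℂ)⁻¹ * ((Real.sqrt 2:ℂ)⁻¹ * (u 0 + ω^m.val * u 1)
              + ω^j.val * ((Real.sqrt 2:ℂ)⁻¹ * (u 0 - ω^m.val * u 1))),
            (Real.sqrt 2:ℂ)⁻¹ * ((Real.sqrt 2:ℂ)⁻¹ * (u 0 + ω^m.val * u 1)
              + (-ω^j.val) * ((Real.sqrt 2:ℂ)⁻¹ * (u 0 - ω^m.val * u 1)))] := by
      rw [List.prod_cons, List.prod_append, List.prod_cons, List.prod_replicate, List.prod_replicate]
      rw [← Matrix.mulVec_mulVec, ← Matrix.mulVec_mulVec, ← Matrix.mulVec_mulVec]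
      rw [Tmat_pow_mulVec, Hmat_mulVec, Tmat_pow_mulVec, Hmat_mulVec]
      funext i
      fin_cases i <;> simp <;> ring
    have hphiS : (Real.sqrt 2:ℂ)^k * (u 0 + ω^m.val * u 1) = phi (((a0,b0,c0,d0) : Z4) + r) := by
      rw [← phi_add, ← hX0', ← hXr]
      ring
    have hphiT : (Real.sqrt 2:ℂ)^k * (u 0 - ω^m.val * u 1) = phi (((a0,b0,c0,d0) : Z4) - r) := by
      rw [← phi_sub, ← hX0', ← hXr]
      ring
    have hphiRT : ω^j.val * ((Real.sqrt 2:ℂ)^k * (u 0 - ω^m.val * u 1)) = phi rt := by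
      rw [hphiT, phi_rotj]
    intro i
    rw [hvec]
    fin_cases i
    · obtain ⟨w1, hw1⟩ : ∃ w, (((a0,b0,c0,d0) : Z4) + r + rt).2.1 - (((a0,b0,c0,d0) : Z4) + r + rt).2.2.2 = 4*w := by
        simp only [Prod.fst_add, Prod.snd_add]
        exact ⟨(b0 + r.2.1 + rt.2.1 - (d0 + r.2.2.2 + rt.2.2.2))/4, by omega⟩
      obtain ⟨w2, hw2⟩ : ∃ w, (((a0,b0,c0,d0) : Z4) + r + rt).1 + (((a0,b0,c0,d0) : Z4) + r + rt).2.2.1 = 4*w := by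
        simp only [Prod.fst_add, Prod.snd_add]
        exact ⟨(a0 + r.1 + rt.1 + (c0 + r.2.2.1 + rt.2.2.1))/4, by omega⟩
      obtain ⟨w3, hw3⟩ : ∃ w, (((a0,b0,c0,d0) : Z4) + r + rt).2.1 + (((a0,b0,c0,d0) : Z4) + r + rt).2.2.2 = 4*w := by
        simp only [Prod.fst_add, Prod.snd_add]
        exact ⟨(b0 + r.2.1 + rt.2.1 + (d0 + r.2.2.2 + rt.2.2.2))/4, by omega⟩
      obtain ⟨w4, hw4⟩ : ∃ w, (((a0,b0,c0,d0) : Z4) + r + rt).2.2.1 - (((a0,b0,c0,d0) : Z4) + r + rt).1 = 4*w := by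
        simp only [Prod.fst_add, Prod.snd_add]
        exact ⟨(c0 + r.2.2.1 + rt.2.2.1 - (a0 + r.1 + rt.1))/4, by omega⟩
      have key : (Real.sqrt 2:ℂ)^(k-1) * ((Real.sqrt 2:ℂ)⁻¹ * ((Real.sqrt 2:ℂ)⁻¹ * (u 0 + ω^m.val * u 1)
              + ω^j.val * ((Real.sqrt 2:ℂ)⁻¹ * (u 0 - ω^m.val * u 1)))) = phi (w1, w2, w3, w4) := by
        apply mul_left_cancel₀ (mul_ne_zero (by norm_num : (2:ℂ) ≠ 0) s2c_ne)
        calc 2 * (Real.sqrt 2:ℂ) * ((Real.sqrt 2:ℂ)^(k-1) * ((Real.sqrt 2:ℂ)⁻¹ * ((Real.sqrt 2:ℂ)⁻¹ * (u 0 + ω^m.val * u 1)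
              + ω^j.val * ((Real.sqrt 2:ℂ)⁻¹ * (u 0 - ω^m.val * u 1)))))
            = (Real.sqrt 2:ℂ)^k * (u 0 + ω^m.val * u 1)
              + ω^j.val * ((Real.sqrt 2:ℂ)^k * (u 0 - ω^m.val * u 1)) := entry_quarter hk _ _ _
          _ = phi (((a0,b0,c0,d0) : Z4) + r) + phi rt := by rw [hphiS, hphiRT]
          _ = phi (((a0,b0,c0,d0) : Z4) + r + rt) := phi_add _ _
          _ = 2 * (Real.sqrt 2:ℂ) * phi (w1, w2, w3, w4) := phi_div2s2 hw1 hw2 hw3 hw4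
      exact ⟨w1, w2, w3, w4, by simpa [phi] using key⟩
    · obtain ⟨w1, hw1⟩ : ∃ w, (((a0,b0,c0,d0) : Z4) + r - rt).2.1 - (((a0,b0,c0,d0) : Z4) + r - rt).2.2.2 = 4*w := by
        simp only [Prod.fst_add, Prod.snd_add, Prod.fst_sub, Prod.snd_sub]
        exact ⟨(b0 + r.2.1 - rt.2.1 - (d0 + r.2.2.2 - rt.2.2.2))/4, by omega⟩
      obtain ⟨w2, hw2⟩ : ∃ w, (((a0,b0,c0,d0) : Z4) + r - rt).1 + (((a0,b0,c0,d0) : Z4) + r - rt).2.2.1 = 4*w := by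
        simp only [Prod.fst_add, Prod.snd_add, Prod.fst_sub, Prod.snd_sub]
        exact ⟨(a0 + r.1 - rt.1 + (c0 + r.2.2.1 - rt.2.2.1))/4, by omega⟩
      obtain ⟨w3, hw3⟩ : ∃ w, (((a0,b0,c0,d0) : Z4) + r - rt).2.1 + (((a0,b0,c0,d0) : Z4) + r - rt).2.2.2 = 4*w := by
        simp only [Prod.fst_add, Prod.snd_add, Prod.fst_sub, Prod.snd_sub]
        exact ⟨(b0 + r.2.1 - rt.2.1 + (d0 + r.2.2.2 - rt.2.2.2))/4, by omega⟩
      obtain ⟨w4, hw4⟩ : ∃ w, (((a0,b0,c0,d0) : Z4) + r - rt).2.2.1 - (((a0,b0,c0,d0) : Z4) + r - rt).1 = 4*w := by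
        simp only [Prod.fst_add, Prod.snd_add, Prod.fst_sub, Prod.snd_sub]
        exact ⟨(c0 + r.2.2.1 - rt.2.2.1 - (a0 + r.1 - rt.1))/4, by omega⟩
      have key : (Real.sqrt 2:ℂ)^(k-1) * ((Real.sqrt 2:ℂ)⁻¹ * ((Real.sqrt 2:ℂ)⁻¹ * (u 0 + ω^m.val * u 1)
              + (-ω^j.val) * ((Real.sqrt 2:ℂ)⁻¹ * (u 0 - ω^m.val * u 1)))) = phi (w1, w2, w3, w4) := by
        apply mul_left_cancel₀ (mul_ne_zero (by norm_num : (2:ℂ) ≠ 0) s2c_ne)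
        calc 2 * (Real.sqrt 2:ℂ) * ((Real.sqrt 2:ℂ)^(k-1) * ((Real.sqrt 2:ℂ)⁻¹ * ((Real.sqrt 2:ℂ)⁻¹ * (u 0 + ω^m.val * u 1)
              + (-ω^j.val) * ((Real.sqrt 2:ℂ)⁻¹ * (u 0 - ω^m.val * u 1)))))
            = (Real.sqrt 2:ℂ)^k * (u 0 + ω^m.val * u 1)
              + (-ω^j.val) * ((Real.sqrt 2:ℂ)^k * (u 0 - ω^m.val * u 1)) := entry_quarter hk _ _ _
          _ = phi (((a0,b0,c0,d0) : Z4) + r) - phi rt := by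
              rw [hphiS, ← hphiRT]; ring
          _ = phi (((a0,b0,c0,d0) : Z4) + r - rt) := phi_sub _ _
          _ = 2 * (Real.sqrt 2:ℂ) * phi (w1, w2, w3, w4) := phi_div2s2 hw1 hw2 hw3 hw4
      exact ⟨w1, w2, w3, w4, by simpa [phi] using key⟩
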